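/- Let a, b, c ∈ ℂ satisfy a² = b² + c², and define g : ℝ³ → ℂ (with coordinates (t,x,y)) by g(t,x,y) = exp(a t + b x + c y) − exp(a t − b x + c y) + exp(a t + b x − c y) − exp(a t − b x − c y). Then: (1) g satisfies the 2D wave equation ∂²g/∂t² − ∂²g/∂x² − ∂²g/∂y² = 0 at every point of ℝ³; (2) g satisfies the Dirichlet condition g(t,0,y) = 0 for all t,y ∈ ℝ; and (3) g satisfies the Neumann condition (∂g/∂y)(t,x,0) = 0 for all t,x ∈ ℝ. -/

import Mathlib

/-- Partial derivative in the first variable `t`. -/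
noncomputable def d1 (u : ℝ × ℝ × ℝ → ℂ) : ℝ × ℝ × ℝ → ℂ :=
  fun p => deriv (fun s => u (s, p.2.1, p.2.2)) p.1

/-- Partial derivative in the second variable `x`. -/
noncomputable def d2 (u : ℝ × ℝ × ℝ → ℂ) : ℝ × ℝ × ℝ → ℂ :=
  fun p => deriv (fun s => u (p.1, s, p.2.2)) p.2.1

/-- Partial derivative in the third variable `y`. -/
noncomputable def d3 (u : ℝ × ℝ × ℝ → ℂ) : ℝ × ℝ × ℝ → ℂ :=
  fun p => deriv (fun s => u (p.1, p.2.1, s)) p.2.2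

/-- B-EPGP basis element for the 2D wave equation on the wedge with Dirichlet condition on
`{x = 0}` and Neumann condition on `{y = 0}`. -/
noncomputable def wedgeBasis (a b c : ℂ) : ℝ × ℝ × ℝ → ℂ :=
  fun p => Complex.exp (a * (p.1 : ℂ) + b * (p.2.1 : ℂ) + c * (p.2.2 : ℂ)) -
    Complex.exp (a * (p.1 : ℂ) - b * (p.2.1 : ℂ) + c * (p.2.2 : ℂ)) +
    Complex.exp (a * (p.1 : ℂ) + b * (p.2.1 : ℂ) - c * (p.2.2 : ℂ)) -
    Complex.exp (a * (p.1 : ℂ) - b * (p.2.1 : ℂ) - c * (p.2.2 : ℂ))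

/-- Auxiliary: the all-plus combination. -/
noncomputable def sumB (a b c : ℂ) : ℝ × ℝ × ℝ → ℂ :=
  fun p => Complex.exp (a * (p.1 : ℂ) + b * (p.2.1 : ℂ) + c * (p.2.2 : ℂ)) +
    Complex.exp (a * (p.1 : ℂ) - b * (p.2.1 : ℂ) + c * (p.2.2 : ℂ)) +
    Complex.exp (a * (p.1 : ℂ) + b * (p.2.1 : ℂ) - c * (p.2.2 : ℂ)) +
    Complex.exp (a * (p.1 : ℂ) - b * (p.2.1 : ℂ) - c * (p.2.2 : ℂ))

/-- Auxiliary: the combination appearing after a `y`-derivative. -/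
noncomputable def difB (a b c : ℂ) : ℝ × ℝ × ℝ → ℂ :=
  fun p => Complex.exp (a * (p.1 : ℂ) + b * (p.2.1 : ℂ) + c * (p.2.2 : ℂ)) -
    Complex.exp (a * (p.1 : ℂ) - b * (p.2.1 : ℂ) + c * (p.2.2 : ℂ)) -
    Complex.exp (a * (p.1 : ℂ) + b * (p.2.1 : ℂ) - c * (p.2.2 : ℂ)) +
    Complex.exp (a * (p.1 : ℂ) - b * (p.2.1 : ℂ) - c * (p.2.2 : ℂ))

lemma key (α β : ℂ) (t : ℝ) :
    HasDerivAt (fun s : ℝ => Complex.exp (α * s + β)) (α * Complex.exp (α * t + β)) t := by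
  have h0 : HasDerivAt (fun s : ℝ => (s : ℂ)) 1 t := by
    exact Complex.ofRealCLM.hasDerivAt (x := t) |>.congr_deriv (by simp)
  have h1 : HasDerivAt (fun s : ℝ => (α * s + β : ℂ)) α t := by
    simpa using (h0.const_mul α).add_const β
  exact ((Complex.hasDerivAt_exp (α * t + β)).comp t h1).congr_deriv (mul_comm _ _)

lemma keyE (α β : ℂ) (g : ℝ → ℂ) (w : ℂ) (hg : ∀ s : ℝ, g s = α * s + β) (t : ℝ)
    (hw : w = α * Complex.exp (g t)) :
    HasDerivAt (fun s : ℝ => Complex.exp (g s)) w t := by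
  have ef : (fun s : ℝ => Complex.exp (g s)) = fun s : ℝ => Complex.exp (α * s + β) :=
    funext fun s => by rw [hg]
  rw [ef, hw, hg]
  exact key α β t

lemma Ht (a b c : ℂ) (t x y : ℝ) :
    HasDerivAt (fun s : ℝ => wedgeBasis a b c (s, x, y)) (a * wedgeBasis a b c (t, x, y)) t := by
  have H1 := keyE a (b * x + c * y) (fun s : ℝ => a * s + b * x + c * y) _
    (fun s => by ring) t rfl
  have H2 := keyE a (c * y - b * x) (fun s : ℝ => a * s - b * x + c * y) _
    (fun s => by ring) t rfl
  have H3 := keyE a (b * x - c * y) (fun s : ℝ => a * s + b * x - c * y) _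
    (fun s => by ring) t rfl
  have H4 := keyE a (-(b * x) - c * y) (fun s : ℝ => a * s - b * x - c * y) _
    (fun s => by ring) t rfl
  have hc := ((H1.sub H2).add H3).sub H4
  have : HasDerivAt (fun s : ℝ => wedgeBasis a b c (s, x, y)) _ t := hc
  simpa only [wedgeBasis, mul_sub, mul_add] using this

lemma Hx (a b c : ℂ) (t x y : ℝ) :
    HasDerivAt (fun s : ℝ => wedgeBasis a b c (t, s, y)) (b * sumB a b c (t, x, y)) x := by
  have H1 := keyE b (a * t + c * y) (fun s : ℝ => a * t + b * s + c * y) _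
    (fun s => by ring) x rfl
  have H2 := keyE (-b) (a * t + c * y) (fun s : ℝ => a * t - b * s + c * y) _
    (fun s => by ring) x rfl
  have H3 := keyE b (a * t - c * y) (fun s : ℝ => a * t + b * s - c * y) _
    (fun s => by ring) x rfl
  have H4 := keyE (-b) (a * t - c * y) (fun s : ℝ => a * t - b * s - c * y) _
    (fun s => by ring) x rfl
  have hc := ((H1.sub H2).add H3).sub H4
  have h2 : HasDerivAt (fun s : ℝ => wedgeBasis a b c (t, s, y)) _ x := hc
  have he : b * sumB a b c (t, x, y) =
      b * Complex.exp (a * t + b * x + c * y) - -b * Complex.exp (a * t - b * x + c * y) +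
        b * Complex.exp (a * t + b * x - c * y) - -b * Complex.exp (a * t - b * x - c * y) := by
    simp only [sumB]; ring
  rw [he]
  exact h2

lemma HxS (a b c : ℂ) (t x y : ℝ) :
    HasDerivAt (fun s : ℝ => sumB a b c (t, s, y)) (b * wedgeBasis a b c (t, x, y)) x := by
  have H1 := keyE b (a * t + c * y) (fun s : ℝ => a * t + b * s + c * y) _
    (fun s => by ring) x rfl
  have H2 := keyE (-b) (a * t + c * y) (fun s : ℝ => a * t - b * s + c * y) _
    (fun s => by ring) x rfl
  have H3 := keyE b (a * t - c * y) (fun s : ℝ => a * t + b * s - c * y) _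
    (fun s => by ring) x rfl
  have H4 := keyE (-b) (a * t - c * y) (fun s : ℝ => a * t - b * s - c * y) _
    (fun s => by ring) x rfl
  have hc := ((H1.add H2).add H3).add H4
  have h2 : HasDerivAt (fun s : ℝ => sumB a b c (t, s, y)) _ x := hc
  have he : b * wedgeBasis a b c (t, x, y) =
      b * Complex.exp (a * t + b * x + c * y) + -b * Complex.exp (a * t - b * x + c * y) +
        b * Complex.exp (a * t + b * x - c * y) + -b * Complex.exp (a * t - b * x - c * y) := by
    simp only [wedgeBasis]; ring
  rw [he]
  exact h2

lemma Hy (a b c : ℂ) (t x y : ℝ) :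
    HasDerivAt (fun s : ℝ => wedgeBasis a b c (t, x, s)) (c * difB a b c (t, x, y)) y := by
  have H1 := keyE c (a * t + b * x) (fun s : ℝ => a * t + b * x + c * s) _
    (fun s => by ring) y rfl
  have H2 := keyE c (a * t - b * x) (fun s : ℝ => a * t - b * x + c * s) _
    (fun s => by ring) y rfl
  have H3 := keyE (-c) (a * t + b * x) (fun s : ℝ => a * t + b * x - c * s) _
    (fun s => by ring) y rfl
  have H4 := keyE (-c) (a * t - b * x) (fun s : ℝ => a * t - b * x - c * s) _
    (fun s => by ring) y rfl
  have hc := ((H1.sub H2).add H3).sub H4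
  have h2 : HasDerivAt (fun s : ℝ => wedgeBasis a b c (t, x, s)) _ y := hc
  have he : c * difB a b c (t, x, y) =
      c * Complex.exp (a * t + b * x + c * y) - c * Complex.exp (a * t - b * x + c * y) +
        -c * Complex.exp (a * t + b * x - c * y) - -c * Complex.exp (a * t - b * x - c * y) := by
    simp only [difB]; ring
  rw [he]
  exact h2

lemma HyD (a b c : ℂ) (t x y : ℝ) :
    HasDerivAt (fun s : ℝ => difB a b c (t, x, s)) (c * wedgeBasis a b c (t, x, y)) y := by
  have H1 := keyE c (a * t + b * x) (fun s : ℝ => a * t + b * x + c * s) _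
    (fun s => by ring) y rfl
  have H2 := keyE c (a * t - b * x) (fun s : ℝ => a * t - b * x + c * s) _
    (fun s => by ring) y rfl
  have H3 := keyE (-c) (a * t + b * x) (fun s : ℝ => a * t + b * x - c * s) _
    (fun s => by ring) y rfl
  have H4 := keyE (-c) (a * t - b * x) (fun s : ℝ => a * t - b * x - c * s) _
    (fun s => by ring) y rfl
  have hc := ((H1.sub H2).sub H3).add H4
  have h2 : HasDerivAt (fun s : ℝ => difB a b c (t, x, s)) _ y := hc
  have he : c * wedgeBasis a b c (t, x, y) =
      c * Complex.exp (a * t + b * x + c * y) - c * Complex.exp (a * t - b * x + c * y) -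
        -c * Complex.exp (a * t + b * x - c * y) + -c * Complex.exp (a * t - b * x - c * y) := by
    simp only [wedgeBasis]; ring
  rw [he]
  exact h2

lemma d1_wedge (a b c : ℂ) : d1 (wedgeBasis a b c) = fun p => a * wedgeBasis a b c p :=
  funext fun p => (Ht a b c p.1 p.2.1 p.2.2).deriv

lemma d2_wedge (a b c : ℂ) : d2 (wedgeBasis a b c) = fun p => b * sumB a b c p :=
  funext fun p => (Hx a b c p.1 p.2.1 p.2.2).deriv

lemma d3_wedge (a b c : ℂ) : d3 (wedgeBasis a b c) = fun p => c * difB a b c p :=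
  funext fun p => (Hy a b c p.1 p.2.1 p.2.2).deriv

/-- The four-term exponential combination satisfies the 2D wave equation, the Dirichlet
condition on `{x = 0}`, and the Neumann condition on `{y = 0}` simultaneously and exactly. -/
theorem wedgeBasis_solves_wave_dirichlet_neumann
    (a b c : ℂ) (h : a ^ 2 = b ^ 2 + c ^ 2) :
    (∀ p : ℝ × ℝ × ℝ,
      d1 (d1 (wedgeBasis a b c)) p - d2 (d2 (wedgeBasis a b c)) p -
        d3 (d3 (wedgeBasis a b c)) p = 0) ∧
    (∀ t y : ℝ, wedgeBasis a b c (t, 0, y) = 0) ∧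
    (∀ t x : ℝ, d3 (wedgeBasis a b c) (t, x, 0) = 0) := by
  refine ⟨?_, ?_, ?_⟩
  · intro p
    obtain ⟨t, x, y⟩ := p
    have h11 : d1 (d1 (wedgeBasis a b c)) (t, x, y) = a ^ 2 * wedgeBasis a b c (t, x, y) := by
      rw [d1_wedge]
      show deriv (fun s : ℝ => a * wedgeBasis a b c (s, x, y)) t = _
      rw [((Ht a b c t x y).const_mul a).deriv]
      ring
    have h22 : d2 (d2 (wedgeBasis a b c)) (t, x, y) = b ^ 2 * wedgeBasis a b c (t, x, y) := by
      rw [d2_wedge]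
      show deriv (fun s : ℝ => b * sumB a b c (t, s, y)) x = _
      rw [((HxS a b c t x y).const_mul b).deriv]
      ring
    have h33 : d3 (d3 (wedgeBasis a b c)) (t, x, y) = c ^ 2 * wedgeBasis a b c (t, x, y) := by
      rw [d3_wedge]
      show deriv (fun s : ℝ => c * difB a b c (t, x, s)) y = _
      rw [((HyD a b c t x y).const_mul c).deriv]
      ring
    rw [h11, h22, h33, h]
    ring
  · intro t y
    simp only [wedgeBasis]
    push_cast
    ring_nf
  · intro t x
    rw [d3_wedge]
    simp only [difB]
    push_cast
    ring_nf
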